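/- arXiv:1809.06874 — 2 statements merged into one kernel-verified Lean document; each statement's English description precedes it below -/
import Mathlib

section
/- The function f(R) = (2cos R + 1)/(2cos²R + 2cos R + 1) is strictly increasing on the interval (0, π/2). -/
open Real

/-- `f(R) = (2cos R + 1)/(2cos²R + 2cos R + 1)` is strictly increasing on `(0, π/2)`. -/
theorem stmt_1 :
    StrictMonoOn (fun R : ℝ => (2 * Real.cos R + 1) / (2 * Real.cos R ^ 2 + 2 * Real.cos R + 1))
      (Set.Ioo 0 (π / 2)) := by
  intro x hx y hy hxy
  have hcx : 0 < Real.cos x := Real.cos_pos_of_mem_Ioo ⟨by linarith [hx.1, Real.pi_pos], hx.2⟩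
  have hcy : 0 < Real.cos y := Real.cos_pos_of_mem_Ioo ⟨by linarith [hy.1, Real.pi_pos], hy.2⟩
  have hlt : Real.cos y < Real.cos x :=
    Real.cos_lt_cos_of_nonneg_of_le_pi (le_of_lt hx.1) (by linarith [hy.2, Real.pi_pos]) hxy
  have hdx : 0 < 2 * Real.cos x ^ 2 + 2 * Real.cos x + 1 := by positivity
  have hdy : 0 < 2 * Real.cos y ^ 2 + 2 * Real.cos y + 1 := by positivity
  simp only
  rw [div_lt_div_iff₀ hdx hdy]
  nlinarith [mul_pos hcx hcy, mul_pos (mul_pos hcx hcy) (sub_pos.mpr hlt)]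
end

section
/- For any t > 0 and n ≥ 1, ∫_0^π t^{2n} sin^{2n−1}(φ) / (t²(1+cos φ) + (1−cos φ))^{2n} dφ ≤ 4^{1−n} · ∫_0^π t² sin(φ)/(t²(1+cos φ)+(1−cos φ))² dφ = 2^{1−2n}. -/
open Real


lemma aux_Dpos (t : ℝ) (ht : 0 < t) (φ : ℝ) :
    0 < t ^ 2 * (1 + Real.cos φ) + (1 - Real.cos φ) := by
  have h1 := Real.neg_one_le_cos φ
  have h2 := Real.cos_le_one φ
  rcases eq_or_lt_of_le (by linarith : (0:ℝ) ≤ 1 + Real.cos φ) with h | h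
  · rw [← h]; nlinarith
  · have : 0 < t ^ 2 * (1 + Real.cos φ) := by positivity
    linarith

lemma aux_bound (t : ℝ) (ht : 0 < t) (φ : ℝ) :
    2 * t * Real.sin φ ≤ t ^ 2 * (1 + Real.cos φ) + (1 - Real.cos φ) := by
  have hc := Real.cos_two_mul (φ / 2)
  have hs := Real.sin_two_mul (φ / 2)
  rw [show 2 * (φ / 2) = φ from by ring] at hc hs
  nlinarith [sq_nonneg (t * Real.cos (φ / 2) - Real.sin (φ / 2)),
    Real.sin_sq_add_cos_sq (φ / 2)]

lemma aux_base (t : ℝ) (ht : 0 < t) :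
    (∫ φ in (0 : ℝ)..π,
      t ^ 2 * Real.sin φ / (t ^ 2 * (1 + Real.cos φ) + (1 - Real.cos φ)) ^ 2) = 1 / 2 := by
  have hD := aux_Dpos t ht
  have key : ∀ φ : ℝ, HasDerivAt (fun x => (1 - Real.cos x) / (2 * (t ^ 2 * (1 + Real.cos x) + (1 - Real.cos x))))
      (t ^ 2 * Real.sin φ / (t ^ 2 * (1 + Real.cos φ) + (1 - Real.cos φ)) ^ 2) φ := by
    intro φ
    have hcos := Real.hasDerivAt_cos φ
    have hu : HasDerivAt (fun x => 1 - Real.cos x) (Real.sin φ) φ := by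
      simpa using hcos.const_sub (1:ℝ)
    have hv : HasDerivAt (fun x => 2 * (t ^ 2 * (1 + Real.cos x) + (1 - Real.cos x)))
        (2 * (t ^ 2 * (0 + -Real.sin φ) + (0 - -Real.sin φ))) φ :=
      ((((hasDerivAt_const φ (1:ℝ)).add hcos).const_mul (t^2)).add
        ((hasDerivAt_const φ (1:ℝ)).sub hcos)).const_mul 2
    have hvne : 2 * (t ^ 2 * (1 + Real.cos φ) + (1 - Real.cos φ)) ≠ 0 := by
      have := hD φ; positivity
    have : HasDerivAt (fun x => (1 - Real.cos x) / (2 * (t ^ 2 * (1 + Real.cos x) + (1 - Real.cos x)))) _ φ :=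
      hu.div hv hvne
    convert this using 1
    have hDne := (hD φ).ne'
    rw [div_eq_div_iff (pow_ne_zero _ hDne) (pow_ne_zero _ hvne)]
    ring
  rw [intervalIntegral.integral_eq_sub_of_hasDerivAt (fun φ _ => key φ)]
  · norm_num
  · apply Continuous.intervalIntegrable
    apply Continuous.div (by continuity) (by continuity)
    intro x; exact pow_ne_zero _ (hD x).ne'

lemma aux_alg (a s D : ℝ) (hD : D ≠ 0) (m : ℕ) :
    a^(2*m+2) * s^(2*m+1) / D^(2*m+2) = (a^2*s/D^2) * (a*s/D)^(2*m) := by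
  rw [div_pow, mul_pow, div_mul_div_comm, div_eq_div_iff (pow_ne_zero _ hD) (mul_ne_zero (pow_ne_zero _ hD) (pow_ne_zero _ hD))]
  ring

lemma aux_pow (m : ℕ) : ((1:ℝ)/4)^m * (1/2) = (2:ℝ)^(1 - 2*(m+1:ℤ)) := by
  rw [show (1 - 2*(m+1:ℤ)) = -((2*m+1 : ℕ) : ℤ) by push_cast; ring, zpow_neg, zpow_natCast]
  rw [pow_add, pow_mul]
  norm_num [mul_inv, ← inv_pow]
  ring

/-- For `t > 0` and `n ≥ 1`,
`∫_0^π t^{2n} sin^{2n−1}φ / (t²(1+cos φ)+(1−cos φ))^{2n} dφ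
  ≤ 4^{1−n} ∫_0^π t² sin φ/(t²(1+cos φ)+(1−cos φ))² dφ = 2^{1−2n}`. -/
theorem stmt_5 (t : ℝ) (ht : 0 < t) (n : ℕ) (hn : 1 ≤ n) :
    (∫ φ in (0 : ℝ)..π,
        t ^ (2 * n) * Real.sin φ ^ (2 * n - 1) /
          (t ^ 2 * (1 + Real.cos φ) + (1 - Real.cos φ)) ^ (2 * n))
      ≤ (4 : ℝ) ^ (1 - (n : ℤ)) *
        ∫ φ in (0 : ℝ)..π,
          t ^ 2 * Real.sin φ / (t ^ 2 * (1 + Real.cos φ) + (1 - Real.cos φ)) ^ 2 ∧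
    (4 : ℝ) ^ (1 - (n : ℤ)) *
        (∫ φ in (0 : ℝ)..π,
          t ^ 2 * Real.sin φ / (t ^ 2 * (1 + Real.cos φ) + (1 - Real.cos φ)) ^ 2)
      = (2 : ℝ) ^ (1 - 2 * (n : ℤ)) := by
  obtain ⟨m, rfl⟩ : ∃ m, n = m + 1 := ⟨n - 1, by omega⟩
  have hD := aux_Dpos t ht
  have hDne : ∀ φ : ℝ, (t ^ 2 * (1 + Real.cos φ) + (1 - Real.cos φ)) ≠ 0 :=
    fun φ => (hD φ).ne'
  have hbase := aux_base t ht
  have h4 : (4 : ℝ) ^ (1 - ((m + 1 : ℕ) : ℤ)) = (1 / 4 : ℝ) ^ m := by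
    rw [show (1 - ((m + 1 : ℕ) : ℤ)) = -(m : ℤ) by push_cast; ring, zpow_neg, zpow_natCast]
    rw [one_div, inv_pow]
  constructor
  · -- inequality part
    rw [← intervalIntegral.integral_const_mul]
    apply intervalIntegral.integral_mono_on Real.pi_pos.le
    · apply Continuous.intervalIntegrable
      apply Continuous.div (by continuity) (by continuity)
      intro x; exact pow_ne_zero _ (hDne x)
    · apply Continuous.intervalIntegrable
      apply Continuous.mul continuous_const
      apply Continuous.div (by continuity) (by continuity)
      intro x; exact pow_ne_zero _ (hDne x)
    · intro φ hφ
      have hDpos : 0 < t ^ 2 * (1 + Real.cos φ) + (1 - Real.cos φ) := hD φ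
      have hs : 0 ≤ Real.sin φ := Real.sin_nonneg_of_nonneg_of_le_pi hφ.1 hφ.2
      have hb := aux_bound t ht φ
      rw [show 2 * (m + 1) - 1 = 2 * m + 1 by omega, show 2 * (m + 1) = 2 * m + 2 by omega,
        aux_alg t (Real.sin φ) _ (hDne φ) m, h4]
      have h1 : (t * Real.sin φ / (t ^ 2 * (1 + Real.cos φ) + (1 - Real.cos φ))) ^ (2 * m)
          ≤ (1 / 2 : ℝ) ^ (2 * m) := by
        apply pow_le_pow_left₀ (by positivity)
        rw [div_le_iff₀ hDpos]
        linarith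
      have h1' : ((1:ℝ) / 2) ^ (2 * m) = (1 / 4 : ℝ) ^ m := by
        rw [pow_mul]; norm_num
      have h2 : 0 ≤ t ^ 2 * Real.sin φ / (t ^ 2 * (1 + Real.cos φ) + (1 - Real.cos φ)) ^ 2 := by
        positivity
      calc _ ≤ (t ^ 2 * Real.sin φ / (t ^ 2 * (1 + Real.cos φ) + (1 - Real.cos φ)) ^ 2)
              * (1 / 2 : ℝ) ^ (2 * m) := mul_le_mul_of_nonneg_left h1 h2
        _ = _ := by rw [h1']; ring
  · rw [hbase, h4, aux_pow]; norm_cast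
end
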